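/- The subgroup Γ₁ of SL₂(ℤ) generated by the matrices [[1,2],[0,1]] and [[1,0],[2,1]] contains the principal congruence subgroup SL₂(ℤ,4), i.e. the kernel of the reduction map SL₂(ℤ) → SL₂(ℤ/4ℤ). -/

import Mathlib

section GammaOneAux

private abbrev SL2Z := Matrix.SpecialLinearGroup (Fin 2) ℤ

private def S4 : Set SL2Z := {g : SL2Z |
    (g : Matrix (Fin 2) (Fin 2) ℤ) = !![1, 2; 0, 1] ∨
    (g : Matrix (Fin 2) (Fin 2) ℤ) = !![1, 0; 2, 1]}

private def Tz (k : ℤ) : SL2Z := ⟨!![1,2*k;0,1], by norm_num [Matrix.det_fin_two_of]⟩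
private def Lz (k : ℤ) : SL2Z := ⟨!![1,0;2*k,1], by norm_num [Matrix.det_fin_two_of]⟩

private lemma Tz_add (j k : ℤ) : Tz (j + k) = Tz j * Tz k := Subtype.ext (by
  show _ = (Tz j).1 * (Tz k).1
  simp [Tz, Matrix.mul_fin_two]; ring)

private lemma Lz_add (j k : ℤ) : Lz (j + k) = Lz j * Lz k := Subtype.ext (by
  show _ = (Lz j).1 * (Lz k).1
  simp [Lz, Matrix.mul_fin_two]; ring)

private lemma Tz_zero : Tz 0 = 1 := Subtype.ext (by simp [Tz, Matrix.one_fin_two])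
private lemma Lz_zero : Lz 0 = 1 := Subtype.ext (by simp [Lz, Matrix.one_fin_two])

private lemma Tz_zpow (k : ℤ) : (Tz 1) ^ k = Tz k := by
  induction k using Int.induction_on with
  | zero => simpa using Tz_zero.symm
  | succ n ih => rw [zpow_add, zpow_one, ih, ← Tz_add]
  | pred n ih =>
      have hinv : (Tz 1)⁻¹ = Tz (-1) :=
        (eq_inv_of_mul_eq_one_left (by rw [← Tz_add]; simpa using Tz_zero)).symm
      rw [sub_eq_add_neg, zpow_add, ih, zpow_neg, zpow_one, hinv, ← Tz_add]

private lemma Lz_zpow (k : ℤ) : (Lz 1) ^ k = Lz k := by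
  induction k using Int.induction_on with
  | zero => simpa using Lz_zero.symm
  | succ n ih => rw [zpow_add, zpow_one, ih, ← Lz_add]
  | pred n ih =>
      have hinv : (Lz 1)⁻¹ = Lz (-1) :=
        (eq_inv_of_mul_eq_one_left (by rw [← Lz_add]; simpa using Lz_zero)).symm
      rw [sub_eq_add_neg, zpow_add, ih, zpow_neg, zpow_one, hinv, ← Lz_add]

private lemma Tz_mem (k : ℤ) : Tz k ∈ Subgroup.closure S4 := by
  rw [← Tz_zpow]
  have h1 : Tz 1 ∈ S4 := Or.inl (by norm_num [Tz])
  exact Subgroup.zpow_mem _ (Subgroup.subset_closure h1) k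

private lemma Lz_mem (k : ℤ) : Lz k ∈ Subgroup.closure S4 := by
  rw [← Lz_zpow]
  have h1 : Lz 1 ∈ S4 := Or.inr (by norm_num [Lz])
  exact Subgroup.zpow_mem _ (Subgroup.subset_closure h1) k

private lemma euclid (x y : ℤ) (hy : y ≠ 0) (hpar : x % 2 ≠ y % 2) :
    ∃ k : ℤ, (x + 2 * k * y).natAbs < y.natAbs := by
  have hN : (0:ℤ) < (y.natAbs : ℤ) := by
    have := Int.natAbs_pos.mpr hy; exact_mod_cast this
  set N : ℤ := (y.natAbs : ℤ) with hNdef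
  have hb : (0:ℤ) < 2 * N := by linarith
  set r := x % (2 * N) with hrdef
  have h2 : 0 ≤ r := Int.emod_nonneg x (ne_of_gt hb)
  have h3 : r < 2 * N := Int.emod_lt_of_pos x hb
  have hpar2 : r % 2 = x % 2 := Int.emod_emod_of_dvd x ⟨N, by ring⟩
  have h1 := Int.mul_ediv_add_emod x (2 * N)
  have hyN : y ∣ N := by
    rcases Int.natAbs_eq y with h | h
    · exact ⟨1, by omega⟩
    · exact ⟨-1, by omega⟩
  rcases hyN with ⟨u, hu⟩
  have hdvd : (2 * y) ∣ (r - x) :=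
    ⟨u * (-(x / (2*N))), by linear_combination h1 + (-2*(x/(2*N))) * hu⟩
  rcases lt_or_ge r N with h | h
  · obtain ⟨k, hk⟩ := hdvd
    refine ⟨k, ?_⟩
    have : x + 2 * k * y = r := by linarith [hk]
    omega
  · obtain ⟨k, hk⟩ := hdvd
    refine ⟨k - u, ?_⟩
    have hx : x + 2 * (k - u) * y = r - 2 * N := by linear_combination -hk + 2*hu
    omega

private lemma int_even (x : ℤ) (h : ((x : ℤ) : ZMod 2) = 0) : x % 2 = 0 := by
  have := (ZMod.intCast_zmod_eq_zero_iff_dvd x 2).mp h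
  omega

private lemma int_odd (x : ℤ) (h : ((x : ℤ) : ZMod 2) = 1) : x % 2 = 1 := by
  have h2 : ((x - 1 : ℤ) : ZMod 2) = 0 := by push_cast; rw [h]; ring
  have := (ZMod.intCast_zmod_eq_zero_iff_dvd _ 2).mp h2
  omega

private lemma mod4_to_mod2_one (x : ℤ) (h : ((x : ℤ) : ZMod 4) = 1) :
    ((x : ℤ) : ZMod 2) = 1 := by
  have := congrArg (ZMod.castHom (by norm_num : (2:ℕ) ∣ 4) (ZMod 2)) h
  simpa using this

private lemma mod4_to_mod2_zero (x : ℤ) (h : ((x : ℤ) : ZMod 4) = 0) :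
    ((x : ℤ) : ZMod 2) = 0 := by
  have := congrArg (ZMod.castHom (by norm_num : (2:ℕ) ∣ 4) (ZMod 2)) h
  simpa using this

private lemma key : ∀ n : ℕ, ∀ A : SL2Z,
    (A.1 0 0).natAbs + (A.1 1 0).natAbs < n →
    ((A.1 0 0 : ℤ) : ZMod 4) = 1 →
    ((A.1 0 1 : ℤ) : ZMod 2) = 0 →
    ((A.1 1 0 : ℤ) : ZMod 2) = 0 →
    A ∈ Subgroup.closure S4 := by
  intro n
  induction n with
  | zero => intro A h; omega
  | succ m ih =>
    intro A hmeas ha4 hb2 hc2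
    set a := A.1 0 0 with hadef
    set b := A.1 0 1 with hbdef
    set c := A.1 1 0 with hcdef
    set d := A.1 1 1 with hddef
    have hdet : a * d - b * c = 1 := by
      have := A.2
      rw [Matrix.det_fin_two] at this
      linarith [this]
    have haodd : a % 2 = 1 := int_odd a (mod4_to_mod2_one a ha4)
    have hceven : c % 2 = 0 := int_even c hc2
    have hbeven : b % 2 = 0 := int_even b hb2
    by_cases hc : c = 0
    · -- c = 0 : a * d = 1
      have had : a * d = 1 := by rw [hc] at hdet; linarith
      obtain ⟨m2, hm2⟩ : (2:ℤ) ∣ b := by omega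
      rcases Int.eq_one_or_neg_one_of_mul_eq_one' had with ⟨h1, hd1⟩ | ⟨h1, _⟩
      · have hAeq : A = Tz m2 := Subtype.ext (by
          rw [Matrix.eta_fin_two A.1, ← hadef, ← hbdef, ← hcdef, ← hddef,
            h1, hd1, hc, hm2]
          simp [Tz])
        rw [hAeq]
        exact Tz_mem m2
      · rw [h1] at ha4
        exact absurd ha4 (by decide)
    · -- c ≠ 0
      have hane : a ≠ 0 := by omega
      rcases lt_trichotomy c.natAbs a.natAbs with hlt | heq | hgt
      · -- reduce a using c : T-step
        obtain ⟨k, hk⟩ := euclid a c hc (by omega)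
        set B := Tz k * A with hBdef
        have hBcoe : (B : Matrix (Fin 2) (Fin 2) ℤ) = !![a + 2*k*c, b + 2*k*d; c, d] := by
          show (Tz k).1 * A.1 = _
          rw [Matrix.eta_fin_two A.1, ← hadef, ← hbdef, ← hcdef, ← hddef]
          simp only [Tz, Matrix.mul_fin_two]
          congr 1 <;> ring
        have hB00 : B.1 0 0 = a + 2*k*c := by rw [hBcoe]; simp
        have hB01 : B.1 0 1 = b + 2*k*d := by rw [hBcoe]; simp
        have hB10 : B.1 1 0 = c := by rw [hBcoe]; simp
        have hBmem : B ∈ Subgroup.closure S4 := by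
          apply ih
          · rw [hB00, hB10]; omega
          · rw [hB00]
            obtain ⟨m2, hm2⟩ : (2:ℤ) ∣ c := by omega
            have h0 : ((a + 2*k*c : ℤ) : ZMod 4)
                = (a : ZMod 4) + ((4*(k*m2) : ℤ) : ZMod 4) := by
              rw [hm2]; push_cast; ring
            rw [h0, ha4,
              (ZMod.intCast_zmod_eq_zero_iff_dvd (4*(k*m2)) 4).mpr ⟨k*m2, by ring⟩,
              add_zero]
          · rw [hB01]
            have h0 : ((b + 2*k*d : ℤ) : ZMod 2)
                = (b : ZMod 2) + ((2*(k*d) : ℤ) : ZMod 2) := by push_cast; ring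
            rw [h0, hb2,
              (ZMod.intCast_zmod_eq_zero_iff_dvd (2*(k*d)) 2).mpr ⟨k*d, by ring⟩,
              add_zero]
          · rw [hB10]; exact hc2
        have hAeq : A = Tz (-k) * B := by
          rw [hBdef, ← mul_assoc, ← Tz_add]
          norm_num [Tz_zero]
        rw [hAeq]
        exact mul_mem (Tz_mem _) hBmem
      · omega
      · -- reduce c using a : L-step
        obtain ⟨k, hk⟩ := euclid c a hane (by omega)
        set B := Lz k * A with hBdef
        have hBcoe : (B : Matrix (Fin 2) (Fin 2) ℤ) = !![a, b; c + 2*k*a, d + 2*k*b] := by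
          show (Lz k).1 * A.1 = _
          rw [Matrix.eta_fin_two A.1, ← hadef, ← hbdef, ← hcdef, ← hddef]
          simp only [Lz, Matrix.mul_fin_two]
          congr 1 <;> ring
        have hB00 : B.1 0 0 = a := by rw [hBcoe]; simp
        have hB01 : B.1 0 1 = b := by rw [hBcoe]; simp
        have hB10 : B.1 1 0 = c + 2*k*a := by rw [hBcoe]; simp
        have hBmem : B ∈ Subgroup.closure S4 := by
          apply ih
          · rw [hB00, hB10]; omega
          · rw [hB00]; exact ha4
          · rw [hB01]; exact hb2
          · rw [hB10]
            have h0 : ((c + 2*k*a : ℤ) : ZMod 2)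
                = (c : ZMod 2) + ((2*(k*a) : ℤ) : ZMod 2) := by push_cast; ring
            rw [h0, hc2,
              (ZMod.intCast_zmod_eq_zero_iff_dvd (2*(k*a)) 2).mpr ⟨k*a, by ring⟩,
              add_zero]
        have hAeq : A = Lz (-k) * B := by
          rw [hBdef, ← mul_assoc, ← Lz_add]
          norm_num [Lz_zero]
        rw [hAeq]
        exact mul_mem (Lz_mem _) hBmem

end GammaOneAux

/-- The subgroup `Γ₁` of `SL₂(ℤ)` generated by `[[1,2],[0,1]]` and
`[[1,0],[2,1]]` contains the principal congruence subgroup `SL₂(ℤ,4)`,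
the kernel of reduction modulo `4`. -/
theorem congruence_subgroup_four_le_Gamma_one :
    (Matrix.SpecialLinearGroup.map (Int.castRingHom (ZMod 4)) :
        Matrix.SpecialLinearGroup (Fin 2) ℤ →*
          Matrix.SpecialLinearGroup (Fin 2) (ZMod 4)).ker ≤
      Subgroup.closure
        {g : Matrix.SpecialLinearGroup (Fin 2) ℤ |
          (g : Matrix (Fin 2) (Fin 2) ℤ) = !![1, 2; 0, 1] ∨
          (g : Matrix (Fin 2) (Fin 2) ℤ) = !![1, 0; 2, 1]} := by
  intro A hA
  rw [MonoidHom.mem_ker] at hA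
  have hcoe : ∀ i j, ((A.1 i j : ℤ) : ZMod 4) = (1 : Matrix (Fin 2) (Fin 2) (ZMod 4)) i j := by
    intro i j
    have h := congrArg (fun M : Matrix.SpecialLinearGroup (Fin 2) (ZMod 4) =>
      (M : Matrix (Fin 2) (Fin 2) (ZMod 4)) i j) hA
    simpa [Matrix.SpecialLinearGroup.map_apply_coe] using h
  have h00 : ((A.1 0 0 : ℤ) : ZMod 4) = 1 := by simpa [Matrix.one_apply] using hcoe 0 0
  have h01 : ((A.1 0 1 : ℤ) : ZMod 4) = 0 := by simpa [Matrix.one_apply] using hcoe 0 1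
  have h10 : ((A.1 1 0 : ℤ) : ZMod 4) = 0 := by simpa [Matrix.one_apply] using hcoe 1 0
  exact key ((A.1 0 0).natAbs + (A.1 1 0).natAbs + 1) A (by omega) h00
    (mod4_to_mod2_zero _ h01) (mod4_to_mod2_zero _ h10)
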